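/- Let H be a real Hilbert space, C ⊆ H a nonempty closed r-prox-regular set (r > 0), and V : H → ℝ a differentiable function with Lipschitz continuous gradient ∇V. Let x(·) be the unique locally absolutely continuous solution of ẋ(t) ∈ −∇V(x(t)) − N(C, x(t)) a.e. on [0,∞) with x(0) = x₀ ∈ C. If V is bounded from below on C, then the limit V_∞ = lim_{t→+∞} V(x(t)) exists, ẋ ∈ L²([0,+∞); H), and ∫₀^{+∞} ‖ẋ(s)‖² ds = V(x₀) − V_∞. -/

import Mathlib

open Set Filter Metric MeasureTheory Topology
open scoped RealInnerProductSpace NNReal ENNReal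

set_option linter.unusedSectionVars false
set_option maxHeartbeats 1000000

variable {H : Type*} [NormedAddCommGroup H] [InnerProductSpace ℝ H] [CompleteSpace H]

section AuxLemmas

variable {V : H → ℝ} {V' : H → H} {k : ℝ≥0} {x₀ : H} {x x' : ℝ → H}

lemma aux_xcont {t : ℝ} (hint : IntegrableOn x' (Icc 0 t))
    (hinteg : ∀ τ ∈ Icc (0:ℝ) t, x τ = x₀ + ∫ s in (0:ℝ)..τ, x' s) :
    ContinuousOn x (Icc 0 t) := by
  have h1 : ContinuousOn (fun τ => x₀ + ∫ s in Ioc (0:ℝ) τ, x' s) (Icc 0 t) :=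
    continuousOn_const.add (intervalIntegral.continuousOn_primitive hint)
  refine h1.congr fun τ hτ => ?_
  rw [hinteg τ hτ, intervalIntegral.integral_of_le hτ.1]

lemma aux_chain (hV : ∀ y, HasGradientAt V (V' y) y) {u : ℝ → H} {u' : H} {τ : ℝ}
    (hu : HasDerivAt u u' τ) : HasDerivAt (fun s => V (u s)) ⟪V' (u τ), u'⟫ τ := by
  have h := (hV (u τ)).hasFDerivAt.comp_hasDerivAt τ hu
  simp at h; exact h

lemma aux_innerInt (hV' : LipschitzWith k V') {t : ℝ}
    (hxc : ContinuousOn x (Icc 0 t)) (hint : IntegrableOn x' (Icc 0 t))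
    {M : ℝ} (hM : ∀ τ ∈ Icc (0:ℝ) t, ‖V' (x τ)‖ ≤ M) :
    IntegrableOn (fun s => ⟪V' (x s), x' s⟫) (Icc 0 t) := by
  have hmeas : AEStronglyMeasurable (fun s => ⟪V' (x s), x' s⟫) (volume.restrict (Icc 0 t)) :=
    ((hV'.continuous.comp_continuousOn hxc).aestronglyMeasurable measurableSet_Icc).inner
      hint.aestronglyMeasurable
  refine Integrable.mono' (hint.norm.const_mul M) hmeas ?_
  filter_upwards [ae_restrict_mem measurableSet_Icc] with s hs
  calc ‖⟪V' (x s), x' s⟫‖ ≤ ‖V' (x s)‖ * ‖x' s‖ := by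
        rw [Real.norm_eq_abs]; exact abs_real_inner_le_norm _ _
    _ ≤ M * ‖x' s‖ := mul_le_mul_of_nonneg_right (hM s hs) (norm_nonneg _)

lemma aux_ftc (hV : ∀ y, HasGradientAt V (V' y) y) (hV' : LipschitzWith k V')
    {t : ℝ} (ht : 0 ≤ t) (hint : IntegrableOn x' (Icc 0 t))
    (hinteg : ∀ τ ∈ Icc (0:ℝ) t, x τ = x₀ + ∫ s in (0:ℝ)..τ, x' s) :
    V (x t) = V (x 0) + ∫ s in (0:ℝ)..t, ⟪V' (x s), x' s⟫ := by
  have hxc : ContinuousOn x (Icc 0 t) := aux_xcont hint hinteg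
  have ht0 : (0:ℝ) ∈ Icc (0:ℝ) t := ⟨le_refl 0, ht⟩
  have htt : t ∈ Icc (0:ℝ) t := ⟨ht, le_refl t⟩
  obtain ⟨M0, hM0⟩ := isCompact_Icc.exists_bound_of_continuousOn
      (hV'.continuous.comp_continuousOn hxc)
  set M := max M0 0 with hMdef
  have hM : ∀ τ ∈ Icc (0:ℝ) t, ‖V' (x τ)‖ ≤ M := fun τ hτ => (hM0 τ hτ).trans (le_max_left _ _)
  have hMnn : (0:ℝ) ≤ M := le_max_right _ _
  set I := ∫ s in Icc (0:ℝ) t, ‖x' s‖ with hIdef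
  have hInn : 0 ≤ I := setIntegral_nonneg measurableSet_Icc fun s _ => norm_nonneg _
  have hAint := aux_innerInt hV' hxc hint hM
  set A := ∫ s in (0:ℝ)..t, ⟪V' (x s), x' s⟫ with hAdef
  set K := (M + (k:ℝ)) + ((k:ℝ) * I + ((k:ℝ) + M)) with hKdef
  have hKnn : (0:ℝ) ≤ K := by positivity
  have hx0 : x 0 = x₀ := by simpa using hinteg 0 ht0
  have key : ∀ ε : ℝ, 0 < ε → ε ≤ 1 → |V (x t) - V (x 0) - A| ≤ K * ε := by
    intro ε hε hε1
    have hXind : Integrable ((Icc (0:ℝ) t).indicator x') :=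
      (integrable_indicator_iff measurableSet_Icc).2 hint
    obtain ⟨g, -, hg1, hgc, hgint⟩ := hXind.exists_hasCompactSupport_integral_sub_le hε
    have happ : ∫ s in Icc (0:ℝ) t, ‖x' s - g s‖ ≤ ε := by
      have e1 : EqOn (fun s => ‖x' s - g s‖)
          (fun s => ‖(Icc (0:ℝ) t).indicator x' s - g s‖) (Icc (0:ℝ) t) := by
        intro s hs; simp only [indicator_of_mem hs]
      rw [setIntegral_congr_fun measurableSet_Icc e1]
      exact (setIntegral_le_integral ((hXind.sub hgint).norm)
        (Eventually.of_forall fun s => norm_nonneg _)).trans hg1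
    set y : ℝ → H := fun τ => x₀ + ∫ s in (0:ℝ)..τ, g s with hydef
    have hyd : ∀ τ, HasDerivAt y (g τ) τ := fun τ =>
      ((hgc.integral_hasStrictDerivAt 0 τ).hasDerivAt).const_add x₀
    have hycont : Continuous y := continuous_iff_continuousAt.2 fun τ => (hyd τ).continuousAt
    have hy0 : y 0 = x₀ := by simp [hydef]
    have hgsub : IntegrableOn (fun s => ‖x' s - g s‖) (Icc (0:ℝ) t) :=
      (hint.sub hgint.integrableOn).norm
    have hclose : ∀ τ ∈ Icc (0:ℝ) t, ‖x τ - y τ‖ ≤ ε := by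
      intro τ hτ
      have hii : IntervalIntegrable x' volume 0 τ := by
        rw [intervalIntegrable_iff_integrableOn_Ioc_of_le hτ.1]
        exact hint.mono_set ((Ioc_subset_Icc_self).trans (Icc_subset_Icc le_rfl hτ.2))
      have hgi : IntervalIntegrable g volume 0 τ := hgc.intervalIntegrable _ _
      have heq : x τ - y τ = ∫ s in (0:ℝ)..τ, (x' s - g s) := by
        rw [hinteg τ hτ, intervalIntegral.integral_sub hii hgi, hydef]
        simp only [add_sub_add_left_eq_sub]
      rw [heq]
      calc ‖∫ s in (0:ℝ)..τ, (x' s - g s)‖ ≤ ∫ s in (0:ℝ)..τ, ‖x' s - g s‖ :=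
          intervalIntegral.norm_integral_le_integral_norm hτ.1
        _ = ∫ s in Ioc (0:ℝ) τ, ‖x' s - g s‖ := intervalIntegral.integral_of_le hτ.1
        _ ≤ ∫ s in Icc (0:ℝ) t, ‖x' s - g s‖ := by
            refine setIntegral_mono_set hgsub
              (Eventually.of_forall fun s => norm_nonneg _) ?_
            exact ((Ioc_subset_Icc_self).trans (Icc_subset_Icc le_rfl hτ.2)).eventuallyLE
        _ ≤ ε := happ
    have hVyderiv : ∀ s ∈ uIcc (0:ℝ) t, HasDerivAt (fun u => V (y u)) ⟪V' (y s), g s⟫ s :=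
      fun s _ => aux_chain hV (hyd s)
    have hcontig : Continuous fun s => ⟪V' (y s), g s⟫ :=
      Continuous.inner (hV'.continuous.comp hycont) hgc
    have hFTC : ∫ s in (0:ℝ)..t, ⟪V' (y s), g s⟫ = V (y t) - V (y 0) :=
      intervalIntegral.integral_eq_sub_of_hasDerivAt hVyderiv (hcontig.intervalIntegrable _ _)
    -- (b) difference of the two integrals
    have hAiv : IntervalIntegrable (fun s => ⟪V' (x s), x' s⟫) volume 0 t := by
      rw [intervalIntegrable_iff_integrableOn_Ioc_of_le ht]
      exact hAint.mono_set Ioc_subset_Icc_self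
    have hgiv : IntervalIntegrable (fun s => ⟪V' (y s), g s⟫) volume 0 t :=
      hcontig.intervalIntegrable _ _
    have hx'iv : IntervalIntegrable (fun s => ‖x' s‖) volume 0 t := by
      rw [intervalIntegrable_iff_integrableOn_Ioc_of_le ht]
      exact (hint.mono_set Ioc_subset_Icc_self).norm
    have hsubiv : IntervalIntegrable (fun s => ‖x' s - g s‖) volume 0 t := by
      rw [intervalIntegrable_iff_integrableOn_Ioc_of_le ht]
      exact hgsub.mono_set Ioc_subset_Icc_self
    have hBiv : IntervalIntegrable
        (fun s => (k:ℝ) * ε * ‖x' s‖ + ((k:ℝ) * ε + M) * ‖x' s - g s‖) volume 0 t :=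
      (hx'iv.const_mul _).add (hsubiv.const_mul _)
    have hpoint : ∀ s ∈ Icc (0:ℝ) t, |⟪V' (y s), g s⟫ - ⟪V' (x s), x' s⟫| ≤
        (k:ℝ) * ε * ‖x' s‖ + ((k:ℝ) * ε + M) * ‖x' s - g s‖ := by
      intro s hs
      have hsplit : ⟪V' (y s), g s⟫ - ⟪V' (x s), x' s⟫
          = ⟪V' (y s) - V' (x s), g s⟫ + ⟪V' (x s), g s - x' s⟫ := by
        rw [inner_sub_left, inner_sub_right]; ring
      have h1 : ‖V' (y s) - V' (x s)‖ ≤ (k:ℝ) * ε := by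
        have := hV'.dist_le_mul (y s) (x s)
        rw [dist_eq_norm, dist_eq_norm] at this
        refine this.trans ?_
        have : ‖y s - x s‖ ≤ ε := by rw [norm_sub_rev]; exact hclose s hs
        exact mul_le_mul_of_nonneg_left this k.2
      have h2 : ‖g s‖ ≤ ‖x' s‖ + ‖x' s - g s‖ := by
        have := norm_le_norm_add_norm_sub' (g s) (x' s)
        rw [norm_sub_rev] at this
        linarith
      have h3 : |⟪V' (y s) - V' (x s), g s⟫| ≤ (k:ℝ) * ε * (‖x' s‖ + ‖x' s - g s‖) := by
        refine (abs_real_inner_le_norm _ _).trans ?_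
        have hg0 : (0:ℝ) ≤ ‖g s‖ := norm_nonneg _
        have hke : (0:ℝ) ≤ (k:ℝ) * ε := by positivity
        nlinarith [norm_nonneg (V' (y s) - V' (x s))]
      have h4 : |⟪V' (x s), g s - x' s⟫| ≤ M * ‖x' s - g s‖ := by
        refine (abs_real_inner_le_norm _ _).trans ?_
        rw [norm_sub_rev (g s)]
        exact mul_le_mul_of_nonneg_right (hM s hs) (norm_nonneg _)
      calc |⟪V' (y s), g s⟫ - ⟪V' (x s), x' s⟫|
          ≤ |⟪V' (y s) - V' (x s), g s⟫| + |⟪V' (x s), g s - x' s⟫| := by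
            rw [hsplit]; exact abs_add_le _ _
        _ ≤ (k:ℝ) * ε * (‖x' s‖ + ‖x' s - g s‖) + M * ‖x' s - g s‖ := add_le_add h3 h4
        _ = (k:ℝ) * ε * ‖x' s‖ + ((k:ℝ) * ε + M) * ‖x' s - g s‖ := by ring
    have hIeq : ∫ s in (0:ℝ)..t, ‖x' s‖ = I := by
      rw [intervalIntegral.integral_of_le ht, hIdef, integral_Icc_eq_integral_Ioc]
    have hJle : ∫ s in (0:ℝ)..t, ‖x' s - g s‖ ≤ ε := by
      rw [intervalIntegral.integral_of_le ht, ← integral_Icc_eq_integral_Ioc]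
      exact happ
    have hdiff : |(∫ s in (0:ℝ)..t, ⟪V' (y s), g s⟫) - A| ≤
        (k:ℝ) * I * ε + ((k:ℝ) + M) * ε := by
      rw [hAdef, ← intervalIntegral.integral_sub hgiv hAiv]
      calc |∫ s in (0:ℝ)..t, (⟪V' (y s), g s⟫ - ⟪V' (x s), x' s⟫)|
          ≤ ∫ s in (0:ℝ)..t, |⟪V' (y s), g s⟫ - ⟪V' (x s), x' s⟫| :=
            intervalIntegral.abs_integral_le_integral_abs ht
        _ ≤ ∫ s in (0:ℝ)..t, ((k:ℝ) * ε * ‖x' s‖ + ((k:ℝ) * ε + M) * ‖x' s - g s‖) :=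
            intervalIntegral.integral_mono_on ht ((hgiv.sub hAiv).abs) hBiv hpoint
        _ = (k:ℝ) * ε * (∫ s in (0:ℝ)..t, ‖x' s‖)
            + ((k:ℝ) * ε + M) * ∫ s in (0:ℝ)..t, ‖x' s - g s‖ := by
            rw [intervalIntegral.integral_add (hx'iv.const_mul _) (hsubiv.const_mul _),
              intervalIntegral.integral_const_mul, intervalIntegral.integral_const_mul]
        _ ≤ (k:ℝ) * I * ε + ((k:ℝ) + M) * ε := by
            rw [hIeq]
            have hJnn : (0:ℝ) ≤ ∫ s in (0:ℝ)..t, ‖x' s - g s‖ :=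
              intervalIntegral.integral_nonneg ht fun s _ => norm_nonneg _
            have hkε : (k:ℝ) * ε ≤ (k:ℝ) := by
              calc (k:ℝ) * ε ≤ (k:ℝ) * 1 :=
                    mul_le_mul_of_nonneg_left hε1 (NNReal.coe_nonneg k)
                _ = (k:ℝ) := mul_one _
            have hkεnn : (0:ℝ) ≤ (k:ℝ) * ε + M := by positivity
            have h5 : ((k:ℝ) * ε + M) * (∫ s in (0:ℝ)..t, ‖x' s - g s‖)
                ≤ ((k:ℝ) + M) * ε := by
              have := mul_le_mul (add_le_add hkε (le_refl M)) hJle hJnn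
                (by positivity : (0:ℝ) ≤ (k:ℝ) + M)
              linarith
            have h6 : (k:ℝ) * ε * I = (k:ℝ) * I * ε := by ring
            linarith
    -- (c) |V (y t) - V (x t)|
    have hVyx : |V (y t) - V (x t)| ≤ (M + (k:ℝ)) * ε := by
      have hconv : Convex ℝ (closedBall (x t) ε) := convex_closedBall _ _
      have hderiv : ∀ z ∈ closedBall (x t) ε,
          HasFDerivWithinAt V (InnerProductSpace.toDual ℝ H (V' z)) (closedBall (x t) ε) z :=
        fun z _ => (hV z).hasFDerivAt.hasFDerivWithinAt
      have hboundz : ∀ z ∈ closedBall (x t) ε,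
          ‖InnerProductSpace.toDual ℝ H (V' z)‖ ≤ M + (k:ℝ) := by
        intro z hz
        rw [LinearIsometryEquiv.norm_map]
        have h1 : ‖V' z‖ ≤ ‖V' (x t)‖ + ‖V' z - V' (x t)‖ :=
          norm_le_norm_add_norm_sub' _ _
        have h2 : ‖V' z - V' (x t)‖ ≤ (k:ℝ) * ‖z - x t‖ := by
          have := hV'.dist_le_mul z (x t)
          rwa [dist_eq_norm, dist_eq_norm] at this
        have h3 : ‖z - x t‖ ≤ ε := by rw [← dist_eq_norm]; exact mem_closedBall.1 hz
        have h4 := hM t htt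
        have h5 : (k:ℝ) * ‖z - x t‖ ≤ (k:ℝ) * 1 :=
          mul_le_mul_of_nonneg_left (h3.trans hε1) (NNReal.coe_nonneg k)
        have h6 : (0:ℝ) ≤ (k:ℝ) := NNReal.coe_nonneg k
        linarith
      have hyt : y t ∈ closedBall (x t) ε := by
        rw [mem_closedBall, dist_comm, dist_eq_norm]; exact hclose t htt
      have hxt : x t ∈ closedBall (x t) ε := mem_closedBall_self hε.le
      have := hconv.norm_image_sub_le_of_norm_hasFDerivWithin_le hderiv hboundz hxt hyt
      rw [Real.norm_eq_abs] at this
      refine this.trans ?_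
      have h5 : ‖y t - x t‖ ≤ ε := by rw [norm_sub_rev]; exact hclose t htt
      have h6 : (0:ℝ) ≤ M + (k:ℝ) := by positivity
      nlinarith
    have heq : V (x t) - V (x 0) - A = (V (x t) - V (y t))
        + ((∫ s in (0:ℝ)..t, ⟪V' (y s), g s⟫) - A) := by
      rw [hFTC, hy0, hx0]; ring
    rw [heq]
    calc |(V (x t) - V (y t)) + ((∫ s in (0:ℝ)..t, ⟪V' (y s), g s⟫) - A)|
        ≤ |V (x t) - V (y t)| + |(∫ s in (0:ℝ)..t, ⟪V' (y s), g s⟫) - A| := abs_add_le _ _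
      _ ≤ (M + (k:ℝ)) * ε + ((k:ℝ) * I * ε + ((k:ℝ) + M) * ε) := by
          refine add_le_add ?_ hdiff
          rw [abs_sub_comm]; exact hVyx
      _ = K * ε := by rw [hKdef]; ring
  have habs : |V (x t) - V (x 0) - A| ≤ 0 := by
    refine le_of_forall_pos_le_add fun η hη => ?_
    have hKpos : (0:ℝ) < K + 1 := by linarith
    have hεpos : 0 < min 1 (η / (K + 1)) := lt_min one_pos (div_pos hη hKpos)
    have h1 := key _ hεpos (min_le_left _ _)
    have h2 : K * min 1 (η / (K + 1)) ≤ K * (η / (K + 1)) :=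
      mul_le_mul_of_nonneg_left (min_le_right _ _) hKnn
    have h3 : K * (η / (K + 1)) ≤ (K + 1) * (η / (K + 1)) := by
      have : (0:ℝ) ≤ η / (K + 1) := (div_pos hη hKpos).le
      nlinarith
    have h4 : (K + 1) * (η / (K + 1)) = η := by field_simp
    linarith
  have h0 := abs_nonneg (V (x t) - V (x 0) - A)
  have : V (x t) - V (x 0) - A = 0 := abs_eq_zero.1 (le_antisymm habs h0)
  linarith

end AuxLemmas

/-- The proximal normal cone of a set `C` at a point `x`:
`ξ ∈ N(C,x)` iff there exist `σ > 0`, `δ > 0` with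
`⟪ξ, y - x⟫ ≤ δ ‖y - x‖²` for all `y ∈ C` with `‖y - x‖ ≤ σ`. -/
def proxNormalCone (C : Set H) (x : H) : Set H :=
  {ξ | ∃ σ > (0 : ℝ), ∃ δ > (0 : ℝ), ∀ y ∈ C, ‖y - x‖ ≤ σ → ⟪ξ, y - x⟫ ≤ δ * ‖y - x‖ ^ 2}

/-- `C` is `r`-prox-regular: every point `s` with `d(s,C) < r` has a unique
nearest point `p s` in `C`, and the nearest-point map `p` is continuous on
the enlargement `U_r(C) = {s | d(s,C) < r}`. -/
def IsProxRegular (C : Set H) (r : ℝ) : Prop :=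
  ∃ p : H → H,
    (∀ s : H, infDist s C < r →
      (p s ∈ C ∧ dist s (p s) = infDist s C) ∧
      ∀ y ∈ C, dist s y = infDist s C → y = p s) ∧
    ContinuousOn p {s : H | infDist s C < r}

/-- The set `f(x) - N(C,x)`. -/
def flowSet (C : Set H) (f : H → H) (x : H) : Set H :=
  {v | f x - v ∈ proxNormalCone C x}

/-- `x : ℝ → H` is the (locally absolutely continuous) solution of the differential
inclusion `ẋ(t) ∈ f(x(t)) - N(C, x(t))` a.e. on `[0, ∞)`, `x(0) = x₀`, with a.e.
derivative `x'`: it starts at `x₀`, stays in `C`, is a locally Bochner integral of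
`x'` (local absolute continuity), has derivative `x' t` at a.e. `t ≥ 0`, and
satisfies the inclusion at a.e. `t ≥ 0`. -/
structure IsSolutionOf (C : Set H) (f : H → H) (x₀ : H) (x x' : ℝ → H) : Prop where
  init : x 0 = x₀
  memC : ∀ t ≥ (0 : ℝ), x t ∈ C
  locInt : ∀ T > (0 : ℝ), IntegrableOn x' (Icc 0 T)
  integ : ∀ t ≥ (0 : ℝ), x t = x₀ + ∫ s in (0 : ℝ)..t, x' s
  deriv : ∀ᵐ t ∂(volume.restrict (Ici (0 : ℝ))), HasDerivAt x (x' t) t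
  incl : ∀ᵐ t ∂(volume.restrict (Ici (0 : ℝ))), x' t ∈ flowSet C f (x t)

/-- Proposition 3.6 (ii): if `V` is bounded from below on `C`, then
`V_∞ = lim_{t→+∞} V(x(t))` exists, `ẋ ∈ L²([0,∞); H)`, and
`∫₀^∞ ‖ẋ(s)‖² ds = V(x₀) - V_∞`. -/
theorem energy_limit_and_L2 (C : Set H) (hC : IsClosed C) (hCne : C.Nonempty)
    (r : ℝ) (hr : 0 < r) (hreg : IsProxRegular C r)
    (V : H → ℝ) (V' : H → H) (hV : ∀ y, HasGradientAt V (V' y) y)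
    (k : ℝ≥0) (hV' : LipschitzWith k V')
    (x₀ : H) (hx₀ : x₀ ∈ C)
    (x x' : ℝ → H) (hsol : IsSolutionOf C (fun y => -V' y) x₀ x x')
    (hbdd : ∃ m : ℝ, ∀ y ∈ C, m ≤ V y) :
    ∃ Vinf : ℝ,
      Tendsto (fun t => V (x t)) Filter.atTop (nhds Vinf) ∧
      MeasureTheory.MemLp x' 2 (volume.restrict (Ici (0 : ℝ))) ∧
      ∫ s in Ici (0 : ℝ), ‖x' s‖ ^ 2 = V x₀ - Vinf := by
  obtain ⟨m, hm⟩ := hbdd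
  -- Step A : a.e. ⟪∇V(x t), ẋ t⟫ = -‖ẋ t‖²
  have hA : ∀ᵐ t ∂(volume.restrict (Ici (0:ℝ))), ⟪V' (x t), x' t⟫ = -‖x' t‖ ^ 2 := by
    have h0 : ∀ᵐ (s : ℝ) ∂volume, s ≠ 0 := by
      rw [ae_iff]
      have : {a : ℝ | ¬a ≠ 0} = {0} := by ext a; simp
      rw [this]
      exact Real.volume_singleton
    filter_upwards [hsol.deriv, hsol.incl, ae_restrict_of_ae h0,
      ae_restrict_mem measurableSet_Ici] with t hd hi ht0 htmem
    have htpos : (0:ℝ) < t := lt_of_le_of_ne htmem (Ne.symm ht0)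
    simp only [flowSet, proxNormalCone, mem_setOf_eq] at hi
    obtain ⟨σ, hσ, δ, hδ, hcone⟩ := hi
    set ξ := -V' (x t) - x' t with hξdef
    have hgd : HasDerivAt (fun s => ⟪ξ, x s - x t⟫ - δ * ‖x s - x t‖ ^ 2) ⟪ξ, x' t⟫ t := by
      have h1 : HasDerivAt (fun s => x s - x t) (x' t) t := hd.sub_const _
      have h2 := HasDerivAt.inner (𝕜 := ℝ) (hasDerivAt_const t ξ) h1
      have h3 := h1.norm_sq
      have h4 := h2.sub (h3.const_mul δ)
      simp at h4; exact h4
    have hmax : IsLocalMax (fun s => ⟪ξ, x s - x t⟫ - δ * ‖x s - x t‖ ^ 2) t := by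
      have hct : ContinuousAt x t := hd.continuousAt
      have e1 : ∀ᶠ s in nhds t, ‖x s - x t‖ ≤ σ := by
        have := hct (Metric.closedBall_mem_nhds (x t) hσ)
        filter_upwards [this] with s hs
        have : dist (x s) (x t) ≤ σ := mem_closedBall.1 hs
        rwa [dist_eq_norm] at this
      have e2 : ∀ᶠ s in nhds t, (0:ℝ) ≤ s := (eventually_gt_nhds htpos).mono fun s hs => hs.le
      filter_upwards [e1, e2] with s h1 h2
      have h3 := hcone (x s) (hsol.memC s h2) h1
      have h4 : ⟪ξ, x t - x t⟫ - δ * ‖x t - x t‖ ^ 2 = 0 := by simp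
      simp only [h4]
      linarith
    have horth : ⟪ξ, x' t⟫ = 0 := hmax.hasDerivAt_eq_zero hgd
    have hexp : ⟪ξ, x' t⟫ = -⟪V' (x t), x' t⟫ - ⟪x' t, x' t⟫ := by
      rw [hξdef, inner_sub_left, inner_neg_left]
    have hsq : ⟪x' t, x' t⟫ = ‖x' t‖ ^ 2 := real_inner_self_eq_norm_sq _
    linarith [horth, hexp ▸ horth]
  -- Step B : energy identity on [0, t]
  have hVal : ∀ t : ℝ, 0 ≤ t → V (x t) = V x₀ - ∫ s in (0:ℝ)..t, ‖x' s‖ ^ 2 := by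
    intro t ht
    rcases eq_or_lt_of_le ht with rfl | htpos
    · simp [hsol.init]
    have hint : IntegrableOn x' (Icc 0 t) := hsol.locInt t htpos
    have hinteg : ∀ τ ∈ Icc (0:ℝ) t, x τ = x₀ + ∫ s in (0:ℝ)..τ, x' s :=
      fun τ hτ => hsol.integ τ hτ.1
    have hftc := aux_ftc hV hV' ht hint hinteg
    have hcongr : ∫ s in (0:ℝ)..t, ⟪V' (x s), x' s⟫ = ∫ s in (0:ℝ)..t, -‖x' s‖ ^ 2 := by
      apply intervalIntegral.integral_congr_ae
      have h1 := (ae_restrict_iff' measurableSet_Ici).1 hA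
      filter_upwards [h1] with s hs hmem
      rw [uIoc_of_le ht] at hmem
      exact hs hmem.1.le
    rw [hsol.init] at hftc
    rw [hftc, hcongr, intervalIntegral.integral_neg]
    ring
  -- integrability of ‖x'‖² on compacts
  have hsq_int : ∀ t : ℝ, 0 < t → IntegrableOn (fun s => ‖x' s‖ ^ 2) (Icc 0 t) := by
    intro t htpos
    have hint : IntegrableOn x' (Icc 0 t) := hsol.locInt t htpos
    have hxc : ContinuousOn x (Icc 0 t) :=
      aux_xcont hint fun τ hτ => hsol.integ τ hτ.1
    obtain ⟨M0, hM0⟩ := isCompact_Icc.exists_bound_of_continuousOn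
      (hV'.continuous.comp_continuousOn hxc)
    have h1 := aux_innerInt hV' hxc hint (fun τ hτ => hM0 τ hτ)
    refine h1.neg.congr ?_
    have h2 := ae_restrict_of_ae_restrict_of_subset
      (Icc_subset_Ici_self : Icc (0:ℝ) t ⊆ Ici 0) hA
    filter_upwards [h2] with s hs
    simp only [Pi.neg_apply, hs]
    ring
  -- uniform bound on the energy integrals
  have hbound : ∀ t : ℝ, 0 ≤ t → ∫ s in (0:ℝ)..t, ‖x' s‖ ^ 2 ≤ V x₀ - m := by
    intro t ht
    have h1 := hVal t ht
    have h2 := hm (x t) (hsol.memC t ht)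
    linarith
  -- global L² integrability
  have hL2 : IntegrableOn (fun s => ‖x' s‖ ^ 2) (Ioi (0:ℝ)) := by
    refine integrableOn_Ioi_of_intervalIntegral_norm_bounded (V x₀ - m) 0
      (b := fun n : ℕ => (n:ℝ) + 1)
      (fun n => (hsq_int ((n:ℝ)+1) (by positivity)).mono_set Ioc_subset_Icc_self)
      (tendsto_atTop_add_const_right _ 1 tendsto_natCast_atTop_atTop) ?_
    filter_upwards with n
    have h0 : (0:ℝ) ≤ (n:ℝ) + 1 := by positivity
    have := hbound ((n:ℝ)+1) h0
    simpa only [norm_pow, norm_norm] using this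
  have hL2' : IntegrableOn (fun s => ‖x' s‖ ^ 2) (Ici (0:ℝ)) := by
    rwa [integrableOn_Ici_iff_integrableOn_Ioi]
  -- measurability of x'
  have hmeas : AEStronglyMeasurable x' (volume.restrict (Ici (0:ℝ))) := by
    have hU : Ici (0:ℝ) = ⋃ n : ℕ, Icc (0:ℝ) ((n:ℝ) + 1) := by
      ext s
      simp only [mem_Ici, mem_iUnion, mem_Icc]
      constructor
      · intro hs
        obtain ⟨n, hn⟩ := exists_nat_ge s
        exact ⟨n, hs, hn.trans (by linarith)⟩
      · rintro ⟨n, h1, h2⟩; exact h1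
    rw [hU, aestronglyMeasurable_iUnion_iff]
    intro n
    exact (hsol.locInt _ (by positivity)).aestronglyMeasurable
  have hmem2 : MemLp x' 2 (volume.restrict (Ici (0:ℝ))) :=
    (memLp_two_iff_integrable_sq_norm hmeas).2 hL2'
  refine ⟨V x₀ - ∫ s in Ici (0:ℝ), ‖x' s‖ ^ 2, ?_, hmem2, by ring⟩
  have htend := intervalIntegral_tendsto_integral_Ioi 0 hL2 tendsto_id
  have h2 : Tendsto (fun t : ℝ => V x₀ - ∫ s in (0:ℝ)..t, ‖x' s‖ ^ 2) atTop
      (nhds (V x₀ - ∫ s in Ioi (0:ℝ), ‖x' s‖ ^ 2)) := tendsto_const_nhds.sub htend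
  rw [integral_Ici_eq_integral_Ioi]
  refine Tendsto.congr' ?_ h2
  filter_upwards [eventually_ge_atTop (0:ℝ)] with t ht
  exact (hVal t ht).symm
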